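/- arXiv:1712.05142 — 4 statements merged into one kernel-verified Lean document; each statement's English description precedes it below -/
import Mathlib

section
/- The area of a triangle with vertices v1=(x1,y1), v2=(x2,y2), v3=(x3,y3) given in counter-clockwise order satisfies 2·Area = det of the 3×3 matrix with rows (x1,x2,x3), (y1,y2,y3), (1,1,1). -/
open MeasureTheory Pointwise

lemma stdTri_eq : convexHull ℝ ({(0,0), (1,0), (0,1)} : Set (ℝ × ℝ)) =
    {p : ℝ × ℝ | 0 ≤ p.1 ∧ 0 ≤ p.2 ∧ p.1 + p.2 ≤ 1} := by
  apply le_antisymm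
  · apply convexHull_min
    · rintro p (rfl | rfl | rfl) <;> norm_num
    · rintro ⟨a1, b1⟩ ⟨ha1, hb1, hs1⟩ ⟨a2, b2⟩ ⟨ha2, hb2, hs2⟩ t u ht hu htu
      refine ⟨?_, ?_, ?_⟩ <;> simp [Prod.smul_mk, Prod.mk_add_mk] <;> nlinarith
  · rintro ⟨a, b⟩ ⟨ha, hb, hs⟩
    have := Finset.centerMass_mem_convexHull (Finset.univ : Finset (Fin 3))
      (w := ![1 - a - b, a, b]) (z := ![((0:ℝ),(0:ℝ)), (1,0), (0,1)])
      (s := {(0,0), (1,0), (0,1)})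
      (by intro i _; fin_cases i <;> simp <;> linarith)
      (by simp [Fin.sum_univ_three]; linarith)
      (by intro i _; fin_cases i <;> simp)
    rwa [Finset.centerMass_eq_of_sum_1 _ _ (by simp [Fin.sum_univ_three]; ring),
      show ∑ i, ![1 - a - b, a, b] i • ![((0:ℝ),(0:ℝ)), (1,0), (0,1)] i = (a, b) by
        simp [Fin.sum_univ_three, Prod.smul_mk]] at this

lemma stdTri_vol : volume ({p : ℝ × ℝ | 0 ≤ p.1 ∧ 0 ≤ p.2 ∧ p.1 + p.2 ≤ 1}) =
    ENNReal.ofReal (1/2) := by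
  have hmeas : MeasurableSet {p : ℝ × ℝ | 0 ≤ p.1 ∧ 0 ≤ p.2 ∧ p.1 + p.2 ≤ 1} := by
    apply MeasurableSet.inter
    · exact measurableSet_le measurable_const measurable_fst
    apply MeasurableSet.inter
    · exact measurableSet_le measurable_const measurable_snd
    · exact measurableSet_le (measurable_fst.add measurable_snd) measurable_const
  rw [Measure.volume_eq_prod, Measure.prod_apply hmeas]
  have hslice : ∀ x : ℝ, volume (Prod.mk x ⁻¹' {p : ℝ × ℝ | 0 ≤ p.1 ∧ 0 ≤ p.2 ∧ p.1 + p.2 ≤ 1})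
      = Set.indicator (Set.Icc (0:ℝ) 1) (fun x => ENNReal.ofReal (1 - x)) x := by
    intro x
    rcases le_or_gt 0 x with hx0 | hx0
    · have : Prod.mk x ⁻¹' {p : ℝ × ℝ | 0 ≤ p.1 ∧ 0 ≤ p.2 ∧ p.1 + p.2 ≤ 1}
          = Set.Icc 0 (1 - x) := by
        ext y; simp [Set.mem_Icc, hx0]; intro _; constructor <;> intro <;> linarith
      rw [this, Real.volume_Icc]
      rcases le_or_gt x 1 with hx1 | hx1
      · rw [Set.indicator_of_mem (Set.mem_Icc.2 ⟨hx0, hx1⟩)]; norm_num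
      · rw [Set.indicator_of_notMem (by simp [Set.mem_Icc]; intro; linarith)]
        rw [ENNReal.ofReal_eq_zero]; linarith
    · have : Prod.mk x ⁻¹' {p : ℝ × ℝ | 0 ≤ p.1 ∧ 0 ≤ p.2 ∧ p.1 + p.2 ≤ 1} = ∅ := by
        ext y; simp; intro h; linarith
      rw [this, Set.indicator_of_notMem (by simp [Set.mem_Icc]; intro; linarith)]
      simp
  simp_rw [hslice]
  rw [lintegral_indicator measurableSet_Icc]
  rw [← ofReal_integral_eq_lintegral_ofReal]
  · rw [show ∫ x in Set.Icc (0:ℝ) 1, (1 - x) = 1/2 by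
      rw [MeasureTheory.integral_Icc_eq_integral_Ioc, ← intervalIntegral.integral_of_le zero_le_one]
      simp [intervalIntegral.integral_sub intervalIntegrable_const intervalIntegral.intervalIntegrable_id]
      norm_num]
  · exact (continuous_const.sub continuous_id).integrableOn_Icc
  · filter_upwards [self_mem_ae_restrict measurableSet_Icc] with x hx
    simp [Set.mem_Icc] at hx; simp only [Pi.zero_apply]; linarith [hx.2]

/-- The area of a triangle with vertices `(x1,y1)`, `(x2,y2)`, `(x3,y3)` in
counter-clockwise order (nonnegative determinant) satisfies
`2·Area = det !![x1,x2,x3; y1,y2,y3; 1,1,1]`. -/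
theorem two_mul_triangle_area_eq_det (x1 y1 x2 y2 x3 y3 : ℝ)
    (hccw : 0 ≤ Matrix.det !![x1, x2, x3; y1, y2, y3; 1, 1, 1]) :
    2 * (volume (convexHull ℝ ({(x1, y1), (x2, y2), (x3, y3)} : Set (ℝ × ℝ)))).toReal =
      Matrix.det !![x1, x2, x3; y1, y2, y3; 1, 1, 1] := by
  set D := Matrix.det !![x1, x2, x3; y1, y2, y3; 1, 1, 1] with hD
  have hDval : D = (x2 - x1) * (y3 - y1) - (x3 - x1) * (y2 - y1) := by
    rw [hD, Matrix.det_fin_three]; simp [Matrix.cons_val_zero, Matrix.cons_val_one]; ring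
  set L := Matrix.toLin (Module.Basis.finTwoProd ℝ) (Module.Basis.finTwoProd ℝ)
    !![x2 - x1, x3 - x1; y2 - y1, y3 - y1] with hL
  have hLdet : LinearMap.det L = D := by
    rw [hL, LinearMap.det_toLin, Matrix.det_fin_two_of, hDval]
  have hLapp : ∀ p : ℝ × ℝ, L p = ((x2-x1) * p.1 + (x3-x1) * p.2, (y2-y1) * p.1 + (y3-y1) * p.2) :=
    fun p => Matrix.toLin_finTwoProd_apply _ _ _ _ p
  have himg : convexHull ℝ ({(x1, y1), (x2, y2), (x3, y3)} : Set (ℝ × ℝ)) =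
      (x1, y1) +ᵥ (L '' convexHull ℝ ({(0,0), (1,0), (0,1)} : Set (ℝ × ℝ))) := by
    rw [L.image_convexHull, ← convexHull_vadd]
    congr 1
    rw [Set.image_insert_eq, Set.image_insert_eq, Set.image_singleton]
    simp only [hLapp, Set.vadd_set_insert, Set.vadd_set_singleton]
    norm_num [Prod.ext_iff]
  rw [himg, stdTri_eq, measure_vadd, Measure.addHaar_image_linearMap, hLdet, stdTri_vol,
    abs_of_nonneg (hDval ▸ hccw)]
  rw [← ENNReal.ofReal_mul (le_trans hccw le_rfl)]
  rw [ENNReal.toReal_ofReal (by positivity)]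
  ring
end

section
/- Correctness of the addition gadget: let p0, x, y, z, q1, q2 be points in ℝ² with p0, x, y, z collinear on a line ℓ, z ≠ p0, such that the triangles (p0,x,q1) and (y,z,q1) have equal (nonzero) area and the triangles (p0,y,q2) and (x,z,q2) have equal (nonzero) area, where q1 and q2 do not lie on ℓ. Identifying each point w on ℓ with its signed coordinate along ℓ with origin p0, it follows that z = x + y. -/
/-- Cross product of two planar vectors. -/
def cr (u v : ℝ × ℝ) : ℝ := u.1 * v.2 - u.2 * v.1

/-- Unsigned area of the triangle with vertices `a`, `b`, `c` in ℝ². -/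
noncomputable def triArea (a b c : ℝ × ℝ) : ℝ := |cr (b - a) (c - a)| / 2

/-- Correctness of the addition gadget: let `p0, x, y, z` be points on the line `ℓ`
through `p0` with unit direction `u` (with signed coordinates `0, X, Y, Z`, all of
`x, y, z` distinct from `p0`), and let `q1, q2` be points not on `ℓ`.  If the triangles
`(p0,x,q1)` and `(y,z,q1)` have equal nonzero area and the triangles `(p0,y,q2)` and
`(x,z,q2)` have equal nonzero area, then `Z = X + Y`. -/
theorem addition_gadget (p0 q1 q2 u : ℝ × ℝ) (hu : ‖u‖ = 1)
    (X Y Z : ℝ) (hX : X ≠ 0) (hY : Y ≠ 0) (hZ : Z ≠ 0)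
    (x y z : ℝ × ℝ)
    (hx : x = p0 + X • u) (hy : y = p0 + Y • u) (hz : z = p0 + Z • u)
    (hq1 : ∀ t : ℝ, q1 ≠ p0 + t • u) (hq2 : ∀ t : ℝ, q2 ≠ p0 + t • u)
    (h1 : triArea p0 x q1 = triArea y z q1) (h1' : triArea p0 x q1 ≠ 0)
    (h2 : triArea p0 y q2 = triArea x z q2) (h2' : triArea p0 y q2 ≠ 0) :
    Z = X + Y := by
  subst hx hy hz
  set c1 : ℝ := cr u (q1 - p0) with hc1
  set c2 : ℝ := cr u (q2 - p0) with hc2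
  have e1 : triArea p0 (p0 + X • u) q1 = |X * c1| / 2 := by
    simp only [triArea, cr, hc1, Prod.fst_sub, Prod.snd_sub, Prod.fst_add, Prod.snd_add,
      Prod.smul_fst, Prod.smul_snd, smul_eq_mul]
    ring_nf
  have e1' : triArea (p0 + Y • u) (p0 + Z • u) q1 = |(Z - Y) * c1| / 2 := by
    simp only [triArea, cr, hc1, Prod.fst_sub, Prod.snd_sub, Prod.fst_add, Prod.snd_add,
      Prod.smul_fst, Prod.smul_snd, smul_eq_mul]
    ring_nf
  have e2 : triArea p0 (p0 + Y • u) q2 = |Y * c2| / 2 := by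
    simp only [triArea, cr, hc2, Prod.fst_sub, Prod.snd_sub, Prod.fst_add, Prod.snd_add,
      Prod.smul_fst, Prod.smul_snd, smul_eq_mul]
    ring_nf
  have e2' : triArea (p0 + X • u) (p0 + Z • u) q2 = |(Z - X) * c2| / 2 := by
    simp only [triArea, cr, hc2, Prod.fst_sub, Prod.snd_sub, Prod.fst_add, Prod.snd_add,
      Prod.smul_fst, Prod.smul_snd, smul_eq_mul]
    ring_nf
  rw [e1, e1'] at h1
  rw [e2, e2'] at h2
  rw [e1] at h1'
  rw [e2] at h2'
  have hc1ne : c1 ≠ 0 := by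
    intro h; apply h1'; rw [h]; simp
  have hc2ne : c2 ≠ 0 := by
    intro h; apply h2'; rw [h]; simp
  have a1 : |X| = |Z - Y| := by
    have := h1
    rw [abs_mul, abs_mul] at this
    have h2 : |c1| ≠ 0 := abs_ne_zero.mpr hc1ne
    field_simp at this
    linarith
  have a2 : |Y| = |Z - X| := by
    have := h2
    rw [abs_mul, abs_mul] at this
    field_simp at this
    linarith
  rcases abs_eq_abs.mp a1 with h1c | h1c <;>
    rcases abs_eq_abs.mp a2 with h2c | h2c <;>
    first
      | linarith
      | (exfalso; apply hZ; linarith)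
      | (exfalso; apply hX; linarith)
      | (exfalso; apply hY; linarith)
end

section
/- Intercept theorem for the multiplication gadget: let p0, p1, x, y, z be points on a line ℓ in ℝ² and p, p' be points on another line through p0 distinct from ℓ, all different from p0. If the line through p1 and p is parallel to the line through y and p', and the line through x and p is parallel to the line through z and p', then, writing X, Y, Z, 1 for the signed coordinates of x, y, z, p1 along ℓ with origin p0, we have X·Y = Z. -/
/-- Intercept theorem for the multiplication gadget: let `p0, p1, x, y, z` be points on
the line `ℓ` through `p0` with unit direction `u` (signed coordinates `0, 1, X, Y, Z`),
and let `p, p'` be points (distinct from `p0`) on another line through `p0` with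
direction `w` not parallel to `u`.  If the line through `p1, p` is parallel to the line
through `y, p'`, and the line through `x, p` is parallel to the line through `z, p'`,
then `X·Y = Z`. -/
theorem intercept_multiplication (p0 u w : ℝ × ℝ) (hu : ‖u‖ = 1) (hind : cr u w ≠ 0)
    (X Y Z s t : ℝ) (hX : X ≠ 0) (hY : Y ≠ 0) (hZ : Z ≠ 0) (hs : s ≠ 0) (ht : t ≠ 0)
    (p1 x y z p p' : ℝ × ℝ)
    (hp1 : p1 = p0 + (1 : ℝ) • u)
    (hx : x = p0 + X • u) (hy : y = p0 + Y • u) (hz : z = p0 + Z • u)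
    (hp : p = p0 + s • w) (hp' : p' = p0 + t • w)
    (hpar1 : cr (p - p1) (p' - y) = 0)
    (hpar2 : cr (p - x) (p' - z) = 0) :
    X * Y = Z := by
  subst hp1 hx hy hz hp hp'
  simp only [cr, Prod.fst_add, Prod.snd_add, Prod.fst_sub, Prod.snd_sub,
    Prod.smul_fst, Prod.smul_snd, smul_eq_mul] at hpar1 hpar2 hind
  have h1 : (t - s * Y) * (w.1 * u.2 - w.2 * u.1) = 0 := by ring_nf; ring_nf at hpar1; linarith
  have h2 : (X * t - s * Z) * (w.1 * u.2 - w.2 * u.1) = 0 := by ring_nf; ring_nf at hpar2; linarith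
  have hw : w.1 * u.2 - w.2 * u.1 ≠ 0 := by intro h; apply hind; linarith
  have e1 : t = s * Y := by
    have := mul_eq_zero.1 h1
    rcases this with h | h
    · linarith
    · exact absurd h hw
  have e2 : X * t = s * Z := by
    rcases mul_eq_zero.1 h2 with h | h
    · linarith
    · exact absurd h hw
  have : s * (X * Y) = s * Z := by rw [← e2, e1]; ring
  exact mul_left_cancel₀ hs this
end

section
/- Coplanarity via connectedness: let T be a plane triangulation drawn in ℝ³ (a map from vertices of T to points in ℝ³). Define the coplanar graph on the inner faces of T, with an edge between two faces adjacent in T whenever their vertex sets lie in a common plane. If the coplanar graph is connected and every face spans a plane (its three vertices are affinely independent), then all vertices of T lie in a common plane. -/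
set_option maxHeartbeats 1000000

lemma span_eq_of_coplanar_union {A B : Set (EuclideanSpace ℝ (Fin 3))}
    (hA : ¬ Collinear ℝ A) (hB : ¬ Collinear ℝ B) (h : Coplanar ℝ (A ∪ B)) :
    affineSpan ℝ A = affineSpan ℝ B := by
  have key : ∀ C : Set (EuclideanSpace ℝ (Fin 3)), C ⊆ A ∪ B → ¬ Collinear ℝ C →
      affineSpan ℝ C = affineSpan ℝ (A ∪ B) := by
    intro C hCsub hC
    have hCne : C.Nonempty := by
      by_contra hne
      rw [Set.not_nonempty_iff_eq_empty] at hne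
      exact hC (hne ▸ collinear_empty ℝ _)
    have hle : vectorSpan ℝ C ≤ vectorSpan ℝ (A ∪ B) := vectorSpan_mono ℝ hCsub
    have h2 : 2 ≤ Module.finrank ℝ (vectorSpan ℝ C) := by
      by_contra hlt
      push_neg at hlt
      exact hC (collinear_iff_finrank_le_one.mpr (Nat.lt_succ_iff.mp hlt))
    have heq : vectorSpan ℝ C = vectorSpan ℝ (A ∪ B) :=
      Submodule.eq_of_le_of_finrank_le hle (h.finrank_le_two.trans h2)
    obtain ⟨p, hp⟩ := hCne
    exact AffineSubspace.ext_of_direction_eq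
      (by rw [direction_affineSpan, direction_affineSpan, heq])
      ⟨p, subset_affineSpan ℝ _ hp, subset_affineSpan ℝ _ (hCsub hp)⟩
  rw [key A Set.subset_union_left hA, key B Set.subset_union_right hB]



/-- Coplanarity via connectedness of the coplanar graph: let `T` be a plane
triangulation with inner (triangular) faces `faces`, drawn in ℝ³ via the vertex
placement `D`, such that every vertex lies on some face and every face spans a plane
(its three vertices are not collinear).  The coplanar graph `CG` has the faces as
vertices, two faces being adjacent whenever they share an edge (two vertices) and the
images of their vertices lie in a common plane.  If `CG` is connected, then all
vertices of `T` lie in a common plane. -/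
theorem coplanar_of_coplanarGraph_connected (n : ℕ) (faces : Finset (Finset (Fin n)))
    (hcard : ∀ f ∈ faces, f.card = 3)
    (D : Fin n → EuclideanSpace ℝ (Fin 3))
    (hnd : ∀ f ∈ faces, ¬ Collinear ℝ (D '' (f : Set (Fin n))))
    (hcover : ∀ v : Fin n, ∃ f ∈ faces, v ∈ f)
    (CG : SimpleGraph {f // f ∈ faces})
    (hCG : ∀ f g : {f // f ∈ faces}, CG.Adj f g ↔
      f ≠ g ∧ (f.1 ∩ g.1).card = 2 ∧ Coplanar ℝ (D '' ((f.1 ∪ g.1 : Finset (Fin n)) : Set (Fin n))))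
    (hconn : CG.Connected) :
    Coplanar ℝ (Set.range D) := by
  obtain ⟨f0⟩ := hconn.nonempty
  have key : ∀ a b : {f // f ∈ faces}, CG.Adj a b →
      affineSpan ℝ (D '' (a.1 : Set (Fin n))) = affineSpan ℝ (D '' (b.1 : Set (Fin n))) := by
    intro a b hab
    obtain ⟨-, -, hcop⟩ := (hCG a b).mp hab
    rw [Finset.coe_union, Set.image_union] at hcop
    exact span_eq_of_coplanar_union (hnd _ a.2) (hnd _ b.2) hcop
  have main : ∀ g : {f // f ∈ faces},
      affineSpan ℝ (D '' (g.1 : Set (Fin n))) = affineSpan ℝ (D '' (f0.1 : Set (Fin n))) := by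
    intro g
    obtain ⟨w⟩ := hconn.preconnected g f0
    induction w with
    | nil => rfl
    | cons h _ ih => exact (key _ _ h).trans ih
  have hsub : Set.range D ⊆ (affineSpan ℝ (D '' (f0.1 : Set (Fin n))) : Set _) := by
    rintro _ ⟨v, rfl⟩
    obtain ⟨f, hf, hv⟩ := hcover v
    rw [← main ⟨f, hf⟩]
    exact subset_affineSpan ℝ _ ⟨v, hv, rfl⟩
  have hcop0 : Coplanar ℝ (D '' (f0.1 : Set (Fin n))) := by
    obtain ⟨a, b, c, -, -, -, habc⟩ := Finset.card_eq_three.mp (hcard _ f0.2)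
    have : D '' (f0.1 : Set (Fin n)) = {D a, D b, D c} := by
      rw [habc]; simp [Set.image_insert_eq]
    rw [this]
    exact coplanar_triple ℝ _ _ _
  have hle : vectorSpan ℝ (Set.range D) ≤ vectorSpan ℝ (D '' (f0.1 : Set (Fin n))) := by
    have h1 : vectorSpan ℝ (Set.range D) ≤
        (affineSpan ℝ (D '' (f0.1 : Set (Fin n)))).direction := by
      rw [AffineSubspace.direction_eq_vectorSpan]
      exact vectorSpan_mono ℝ hsub
    rwa [direction_affineSpan] at h1
  rw [coplanar_iff_finrank_le_two]
  exact le_trans (Submodule.finrank_mono hle) hcop0.finrank_le_two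
end
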